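/- Let σ ≠ 0 be a real number, let A be the 2×2 real matrix with rows (0,1) and (0,0), and let B = (0,σ)ᵀ ∈ ℝ². Then for every t > 0 the matrix ∫₀ᵗ exp(sA)·B·Bᵀ·exp(sAᵀ) ds is symmetric positive definite. Consequently the Gaussian transition law of the stochastic oscillator dq = p dt, dp = σ dW̃, which has this matrix as covariance, is equivalent to the Lebesgue measure on ℝ² for every t > 0. -/

import Mathlib

open Matrix NormedSpace

lemma exp_of_sq_zero {𝔸 : Type*} [Ring 𝔸] [Algebra ℝ 𝔸] [TopologicalSpace 𝔸]
    [IsTopologicalRing 𝔸] [T2Space 𝔸]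
    (a : 𝔸) (h : a ^ 2 = 0) : NormedSpace.exp a = 1 + a := by
  rw [NormedSpace.exp_eq_tsum ℝ]
  dsimp only
  rw [tsum_eq_sum (s := Finset.range 2)]
  · simp [Finset.sum_range_succ]
  · intro n hn
    have h2 : 2 ≤ n := by simp at hn; omega
    have : a ^ n = 0 := by
      rw [show n = 2 + (n - 2) by omega, pow_add, h, zero_mul]
    simp [this]

/-- **Non-degeneracy of the covariance of the stochastic oscillator.** For `σ ≠ 0`,
`A = !![0,1; 0,0]` and `B = !![0; σ]`, the covariance matrix
`∫₀ᵗ exp(sA) B Bᵀ exp(sAᵀ) ds` of the stochastic oscillator `dq = p dt, dp = σ dW̃`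
is symmetric positive definite for every `t > 0`; hence its Gaussian transition law is
equivalent to Lebesgue measure on `ℝ²`. -/
theorem stmt_6 (σ : ℝ) (hσ : σ ≠ 0)
    (A : Matrix (Fin 2) (Fin 2) ℝ) (hA : A = !![0, 1; 0, 0])
    (B : Matrix (Fin 2) (Fin 1) ℝ) (hB : B = !![0; σ]) :
    ∀ t : ℝ, 0 < t →
      (Matrix.of fun i j =>
        ∫ s in (0 : ℝ)..t,
          (NormedSpace.exp (s • A) * B * Bᵀ * NormedSpace.exp (s • Aᵀ)) i j).PosDef := by
  intro t ht
  subst hA hB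
  have hT : (!![(0:ℝ),1;0,0])ᵀ = !![0,0;1,0] := by
    ext i j; fin_cases i <;> fin_cases j <;> rfl
  have hM : ∀ s : ℝ, NormedSpace.exp (s • !![(0:ℝ), 1; 0, 0]) * !![0; σ] * !![0; σ]ᵀ *
      NormedSpace.exp (s • !![(0:ℝ), 1; 0, 0]ᵀ) = !![σ^2*s^2, σ^2*s; σ^2*s, σ^2] := by
    intro s
    rw [hT, show (!![(0:ℝ); σ])ᵀ = !![0, σ] from by ext i j; fin_cases i <;> fin_cases j <;> rfl]
    have h1 : (s • !![(0:ℝ), 1; 0, 0]) ^ 2 = 0 := by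
      ext i j; fin_cases i <;> fin_cases j <;>
        simp [pow_two, Matrix.mul_apply, Fin.sum_univ_two]
    have h2 : (s • !![(0:ℝ), 0; 1, 0]) ^ 2 = 0 := by
      ext i j; fin_cases i <;> fin_cases j <;>
        simp [pow_two, Matrix.mul_apply, Fin.sum_univ_two]
    rw [exp_of_sq_zero _ h1, exp_of_sq_zero _ h2]
    ext i j
    fin_cases i <;> fin_cases j <;>
      simp [Matrix.mul_apply, Fin.sum_univ_two, Matrix.one_apply] <;> (first | ring1 | exact Or.inl (by ring))
  have hrw : (Matrix.of fun i j =>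
        ∫ s in (0 : ℝ)..t,
          (NormedSpace.exp (s • !![(0:ℝ), 1; 0, 0]) * !![0; σ] * !![0; σ]ᵀ *
            NormedSpace.exp (s • !![(0:ℝ), 1; 0, 0]ᵀ)) i j)
      = !![σ^2*t^3/3, σ^2*t^2/2; σ^2*t^2/2, σ^2*t] := by
    ext i j
    simp only [Matrix.of_apply]
    rw [intervalIntegral.integral_congr
      (g := fun s => (!![σ^2*s^2, σ^2*s; σ^2*s, σ^2] : Matrix (Fin 2) (Fin 2) ℝ) i j)
      (fun s _ => by rw [hM s])]
    fin_cases i <;> fin_cases j <;>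
      simp [intervalIntegral.integral_const_mul, integral_id, mul_comm] <;> ring
  rw [hrw]
  rw [Matrix.posDef_iff_dotProduct_mulVec]
  constructor
  · ext i j
    fin_cases i <;> fin_cases j <;> simp [Matrix.conjTranspose_apply]
  · intro x hx
    have hx' : x 0 ≠ 0 ∨ x 1 ≠ 0 := by
      by_contra h
      push_neg at h
      exact hx (funext fun i => by fin_cases i <;> simp [h.1, h.2])
    simp [dotProduct, Matrix.mulVec, Fin.sum_univ_two]
    have hσ2 : 0 < σ^2 := by positivity
    by_cases h0 : x 0 = 0
    · have h1 : x 1 ≠ 0 := by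
        rcases hx' with h | h
        · exact absurd h0 h
        · exact h
      have h1' : 0 < (x 1)^2 := by positivity
      rw [h0]
      nlinarith [mul_pos (mul_pos hσ2 ht) h1']
    · have h0' : 0 < (x 0)^2 := by positivity
      nlinarith [mul_nonneg (mul_nonneg hσ2.le ht.le) (sq_nonneg (t * x 0 / 2 + x 1)),
        mul_pos (mul_pos hσ2 (pow_pos ht 3)) h0']
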